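/- Let f : ℝᴺ × ℝ → ℝ be continuous, F(x,t) = ∫₀ᵗ f(x,s) ds, and assume: f(x,t) = o(|t|) as t → 0 uniformly in x, F(x,t) ≥ 0 for all (x,t), and for each x the map t ↦ f(x,t)/|t| is non-decreasing on (−∞,0) and on (0,∞). Then for all x ∈ ℝᴺ, all t ≥ 0 and all τ, σ ∈ ℝ: F(x, tτ + σ) ≥ F(x, τ) + f(x, τ)·[((t² − 1)/2)·τ + t·σ]. -/
import Mathlib


open Filter Topology

/-- **Scalar core of Lemma 3.1.** Let `f : ℝᴺ × ℝ → ℝ` be continuous with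
primitive `F(x,t) = ∫₀ᵗ f(x,s) ds`; assume `f(x,t) = o(|t|)` as `t → 0`
uniformly in `x`, `F ≥ 0`, and (WN): `t ↦ f(x,t)/|t|` is non-decreasing on
`(−∞,0)` and on `(0,∞)`. Then for all `x`, `t ≥ 0` and `τ, σ ∈ ℝ`:
`F(x, tτ + σ) ≥ F(x, τ) + f(x, τ)·[((t² − 1)/2)·τ + t·σ]`. -/
theorem scalar_core_lemma_3_1 (N : ℕ)
    (f F : (Fin N → ℝ) → ℝ → ℝ)
    (hf : Continuous fun p : (Fin N → ℝ) × ℝ => f p.1 p.2)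
    (hF : ∀ x t, F x t = ∫ s in (0:ℝ)..t, f x s)
    -- (F2): f(x,t) = o(|t|) as t → 0 uniformly in x, and F ≥ 0
    (hsmall : ∀ ε > 0, ∃ δ > 0, ∀ x t, |t| < δ → |f x t| ≤ ε * |t|)
    (hFnonneg : ∀ x t, 0 ≤ F x t)
    -- (WN): t ↦ f(x,t)/|t| non-decreasing on (0,∞) and on (−∞,0)
    (hWNpos : ∀ x, ∀ s t : ℝ, 0 < s → s ≤ t → f x s / |s| ≤ f x t / |t|)
    (hWNneg : ∀ x, ∀ s t : ℝ, s ≤ t → t < 0 → f x s / |s| ≤ f x t / |t|) :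
    ∀ x, ∀ t : ℝ, 0 ≤ t → ∀ τ σ : ℝ,
      F x (t * τ + σ) ≥ F x τ + f x τ * (((t ^ 2 - 1) / 2) * τ + t * σ) := by
  intro x t ht τ σ
  have hcont : Continuous (f x) := hf.comp (Continuous.prodMk_right x)
  have hint : ∀ p q : ℝ, IntervalIntegrable (f x) MeasureTheory.volume p q :=
    fun p q => hcont.intervalIntegrable p q
  have hF0 : F x 0 = 0 := by rw [hF]; simp
  have hf0 : f x 0 = 0 := by
    obtain ⟨δ, hδ, h⟩ := hsmall 1 one_pos
    have := h x 0 (by simpa using hδ)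
    simpa using this
  have hdiff : ∀ p q : ℝ, F x q - F x p = ∫ s in p..q, f x s := by
    intro p q
    rw [hF, hF, intervalIntegral.integral_interval_sub_left (hint 0 q) (hint 0 p)]
  -- sign of f
  have hsign_pos : ∀ a : ℝ, 0 < a → 0 ≤ f x a := by
    intro a ha
    by_contra hneg
    push_neg at hneg
    have hc : f x a / a < 0 := div_neg_of_neg_of_pos hneg ha
    obtain ⟨δ, hδ, h⟩ := hsmall (-(f x a / a) / 2) (by linarith)
    set s : ℝ := min (δ / 2) a with hs
    have hs0 : 0 < s := lt_min (by linarith) ha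
    have hsδ : |s| < δ := by
      rw [abs_of_pos hs0]
      calc s ≤ δ / 2 := min_le_left _ _
        _ < δ := by linarith
    have h1 := h x s hsδ
    rw [abs_of_pos hs0] at h1
    have h2 : -(-(f x a / a) / 2) ≤ f x s / s := by
      rw [le_div_iff₀ hs0]
      nlinarith [abs_le.mp h1]
    have h3 := hWNpos x s a hs0 (min_le_right _ _)
    rw [abs_of_pos hs0, abs_of_pos ha] at h3
    linarith
  have hsign_neg : ∀ a : ℝ, a < 0 → f x a ≤ 0 := by
    intro a ha
    by_contra hneg
    push_neg at hneg
    have hc : 0 < f x a / (-a) := div_pos hneg (by linarith)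
    obtain ⟨δ, hδ, h⟩ := hsmall (f x a / (-a) / 2) (by linarith)
    set s : ℝ := max (-(δ / 2)) a with hs
    have hs0 : s < 0 := max_lt (by linarith) ha
    have hsδ : |s| < δ := by
      rw [abs_of_neg hs0]
      have : -(δ / 2) ≤ s := le_max_left _ _
      linarith
    have h1 := h x s hsδ
    rw [abs_of_neg hs0] at h1
    have h2 : f x s / (-s) ≤ f x a / (-a) / 2 := by
      rw [div_le_iff₀ (by linarith : (0:ℝ) < -s)]
      nlinarith [abs_le.mp h1]
    have h3 := hWNneg x a s (le_max_right _ _) hs0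
    rw [abs_of_neg hs0, abs_of_neg ha] at h3
    linarith
  -- key comparison lemma
  have key : ∀ a b : ℝ, a ≠ 0 → 0 ≤ a * b →
      F x a + (f x a / a) * ((b ^ 2 - a ^ 2) / 2) ≤ F x b := by
    intro a b ha hab
    set c : ℝ := f x a / a with hc
    have hintc : ∀ p q : ℝ, IntervalIntegrable (fun s => c * s) MeasureTheory.volume p q :=
      fun p q => (continuous_const.mul continuous_id).intervalIntegrable p q
    have hcs : ∀ p q : ℝ, (∫ s in p..q, c * s) = c * ((q ^ 2 - p ^ 2) / 2) := by
      intro p q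
      rw [intervalIntegral.integral_const_mul]; simp
    rcases lt_or_gt_of_ne ha with haneg | hapos
    · -- a < 0, so b ≤ 0
      have hb0 : b ≤ 0 := by nlinarith
      rcases le_total b a with hba | hba
      · -- b ≤ a : f x s ≤ c * s on [b, a]
        have ptw : ∀ s ∈ Set.Icc b a, f x s ≤ c * s := by
          intro s hs
          have hs0 : s < 0 := lt_of_le_of_lt hs.2 haneg
          have h3 := hWNneg x s a hs.2 haneg
          rw [abs_of_neg hs0, abs_of_neg haneg] at h3
          rw [div_le_div_iff₀ (by linarith) (by linarith)] at h3
          have : c * s = f x a / a * s := rfl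
          rw [this, div_mul_eq_mul_div, le_div_iff_of_neg haneg]
          nlinarith
        have hmono := intervalIntegral.integral_mono_on hba (hint b a) (hintc b a) ptw
        rw [hcs] at hmono
        have hd := hdiff b a
        nlinarith [hd, hmono]
      · -- a ≤ b ≤ 0 : c * s ≤ f x s on [a, b]
        have ptw : ∀ s ∈ Set.Icc a b, c * s ≤ f x s := by
          intro s hs
          rcases lt_or_eq_of_le (le_trans hs.2 hb0) with hs0 | hs0
          · have h3 := hWNneg x a s hs.1 hs0
            rw [abs_of_neg hs0, abs_of_neg haneg] at h3
            rw [div_le_div_iff₀ (by linarith) (by linarith)] at h3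
            have : c * s = f x a / a * s := rfl
            rw [this, div_mul_eq_mul_div, div_le_iff_of_neg haneg]
            nlinarith
          · rw [hs0, hf0, mul_zero]
        have hmono := intervalIntegral.integral_mono_on hba (hintc a b) (hint a b) ptw
        rw [hcs] at hmono
        have hd := hdiff a b
        nlinarith [hd, hmono]
    · -- a > 0, so 0 ≤ b
      have hb0 : 0 ≤ b := by nlinarith
      rcases le_total a b with hba | hba
      · -- a ≤ b : c * s ≤ f x s on [a, b]
        have ptw : ∀ s ∈ Set.Icc a b, c * s ≤ f x s := by
          intro s hs
          have hs0 : 0 < s := lt_of_lt_of_le hapos hs.1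
          have h3 := hWNpos x a s hapos hs.1
          rw [abs_of_pos hs0, abs_of_pos hapos] at h3
          rw [div_le_div_iff₀ hapos hs0] at h3
          have : c * s = f x a / a * s := rfl
          rw [this, div_mul_eq_mul_div, div_le_iff₀ hapos]
          nlinarith
        have hmono := intervalIntegral.integral_mono_on hba (hintc a b) (hint a b) ptw
        rw [hcs] at hmono
        have hd := hdiff a b
        nlinarith [hd, hmono]
      · -- 0 ≤ b ≤ a : f x s ≤ c * s on [b, a]
        have ptw : ∀ s ∈ Set.Icc b a, f x s ≤ c * s := by
          intro s hs
          rcases lt_or_eq_of_le (le_trans hb0 hs.1) with hs0 | hs0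
          · have h3 := hWNpos x s a hs0 hs.2
            rw [abs_of_pos hs0, abs_of_pos hapos] at h3
            rw [div_le_div_iff₀ hs0 hapos] at h3
            have : c * s = f x a / a * s := rfl
            rw [this, div_mul_eq_mul_div, le_div_iff₀ hapos]
            nlinarith
          · rw [← hs0, hf0, mul_zero]
        have hmono := intervalIntegral.integral_mono_on hba (hint b a) (hintc b a) ptw
        rw [hcs] at hmono
        have hd := hdiff b a
        nlinarith [hd, hmono]
  -- main assembly
  obtain ⟨b, hb⟩ : ∃ b, b = t * τ + σ := ⟨_, rfl⟩
  rw [← hb]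
  rcases eq_or_ne τ 0 with hτ0 | hτ0
  · rw [hτ0, hf0, hF0]
    nlinarith [hFnonneg x b]
  · obtain ⟨c, hcdef⟩ : ∃ c, c = f x τ / τ := ⟨_, rfl⟩
    have hcτ : f x τ = c * τ := by
      rw [hcdef]; exact (div_mul_cancel₀ _ hτ0).symm
    have hcnn : 0 ≤ c := by
      rw [hcdef]
      rcases lt_or_gt_of_ne hτ0 with h | h
      · rw [← neg_div_neg_eq]
        exact div_nonneg (by linarith [hsign_neg τ h]) (by linarith)
      · exact div_nonneg (hsign_pos τ h) (le_of_lt h)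
    have hident : τ * (((t ^ 2 - 1) / 2) * τ + t * σ)
        = -((t * τ - b) ^ 2) / 2 + (b ^ 2 - τ ^ 2) / 2 := by
      rw [hb]; ring
    rcases le_or_gt 0 (τ * b) with hτb | hτb
    · have hk := key τ b hτ0 hτb
      rw [← hcdef] at hk
      have hle : f x τ * (((t ^ 2 - 1) / 2) * τ + t * σ) ≤ c * ((b ^ 2 - τ ^ 2) / 2) := by
        rw [hcτ, mul_assoc]
        have h1 : τ * (((t ^ 2 - 1) / 2) * τ + t * σ) ≤ (b ^ 2 - τ ^ 2) / 2 := by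
          rw [hident]; nlinarith [sq_nonneg (t * τ - b)]
        exact mul_le_mul_of_nonneg_left h1 hcnn
      linarith
    · have hk := key τ 0 hτ0 (by simp)
      rw [hF0, ← hcdef] at hk
      have heq : c * ((0 ^ 2 - τ ^ 2) / 2) = c * (-(τ ^ 2) / 2) := by ring
      have hsq : b ^ 2 ≤ (t * τ - b) ^ 2 := by
        nlinarith [mul_nonneg ht (by linarith : (0:ℝ) ≤ -(τ * b)), sq_nonneg (t * τ)]
      have hle : f x τ * (((t ^ 2 - 1) / 2) * τ + t * σ) ≤ c * (-(τ ^ 2) / 2) := by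
        rw [hcτ, mul_assoc]
        have h1 : τ * (((t ^ 2 - 1) / 2) * τ + t * σ) ≤ -(τ ^ 2) / 2 := by
          rw [hident]; linarith
        exact mul_le_mul_of_nonneg_left h1 hcnn
      have hFb := hFnonneg x b
      linarith [hk, heq]
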